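/- Let T be a tree with at least 3 vertices such that deleting any edge of T creates a component with at most 2 vertices. Then T is a 1-star. -/

import Mathlib

open SimpleGraph

variable {V : Type*}

/-- The union of the colors of the edges incident to a vertex. -/
def unionAt [Fintype V] [DecidableEq V] (G : SimpleGraph V) [DecidableRel G.Adj]
    {α : Type*} [DecidableEq α] (c : Sym2 V → Finset α) (v : V) : Finset α :=
  (G.neighborFinset v).biUnion fun u => c s(v, u)

/-- `c` is a union vertex-distinguishing edge coloring of `G` with colors
nonempty subsets of `[k]`. -/
def IsUVD [Fintype V] [DecidableEq V] (G : SimpleGraph V) [DecidableRel G.Adj]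
    (k : ℕ) (c : Sym2 V → Finset (Fin k)) : Prop :=
  (∀ e ∈ G.edgeSet, c e ≠ ∅) ∧ (∀ v, unionAt G c v ≠ ∅) ∧
    Function.Injective (unionAt G c)

/-- The union vertex-distinguishing chromatic index. -/
noncomputable def chiUnion [Fintype V] [DecidableEq V] (G : SimpleGraph V)
    [DecidableRel G.Adj] : ℕ :=
  sInf {k | ∃ c : Sym2 V → Finset (Fin k), IsUVD G k c}

/-- `G` has no connected component of order at most two. -/
def NoSmallComponent (G : SimpleGraph V) : Prop :=
  ∀ v : V, ∃ u w : V, u ≠ w ∧ u ≠ v ∧ w ≠ v ∧ G.Reachable v u ∧ G.Reachable v w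

/-- The number of vertices of the component of `v`. -/
noncomputable def compSize (F : SimpleGraph V) (v : V) : ℕ := {u | F.Reachable v u}.ncard

/-- `v` is the center of a component of `F` that is a 1-star. -/
def Is1StarCenter (F : SimpleGraph V) (v : V) : Prop :=
  3 ≤ compSize F v ∧ (∀ u, F.Reachable v u → F.dist v u ≤ 2) ∧
    (∀ u, F.Adj v u → {x | F.Adj u x}.ncard ≤ 2)

/-- `F` is a 1-star: a star on at least three vertices with each edge
subdivided at most once. -/
def Is1Star (F : SimpleGraph V) : Prop := F.Connected ∧ ∃ v, Is1StarCenter F v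

/-- `F` is a forest each of whose components is a 1-star. -/
def IsForestOf1Stars (F : SimpleGraph V) : Prop :=
  F.IsAcyclic ∧ ∀ w : V, ∃ v, F.Reachable w v ∧ Is1StarCenter F v

/-- `A 1, …, A m` is an `m`-star of sets. -/
def IsStar {α : Type*} [DecidableEq α] (m : ℕ) (A : ℕ → Finset α) : Prop :=
  (∀ i j, 1 ≤ i → i ≤ m → 1 ≤ j → j ≤ m → A i = A j → i = j) ∧
  (m = 2 → A 2 ⊂ A 1) ∧
  (m = 3 → A 1 = A 2 ∪ A 3) ∧
  (4 ≤ m → A 1 = A 2 ∪ A 4 ∧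
    ∀ i, 1 ≤ i → (2 * i ≤ m → A (2 * i) ⊂ A 1) ∧
      (2 * i + 1 ≤ m → A (2 * i + 1) ⊂ A (2 * i)))

/-- A collection of sets is an `m`-star. -/
def IsStarColl {α : Type*} [DecidableEq α] (m : ℕ) (S : Finset (Finset α)) : Prop :=
  ∃ A : ℕ → Finset α, IsStar m A ∧ S = (Finset.Icc 1 m).image A

section Aux

variable {T : SimpleGraph V}

lemma reach_congr' {F : SimpleGraph V} {b w : V} (h : F.Reachable b w) :
    compSize F w = compSize F b := by
  unfold compSize
  congr 1
  ext z
  exact ⟨fun hz => h.trans hz, fun hz => h.symm.trans hz⟩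

lemma cover_aux' {a b x w : V} (p : T.Walk x w)
    (hx : (T.deleteEdges {s(a, b)}).Reachable a x ∨ (T.deleteEdges {s(a, b)}).Reachable b x) :
    (T.deleteEdges {s(a, b)}).Reachable a w ∨ (T.deleteEdges {s(a, b)}).Reachable b w := by
  induction p with
  | nil => exact hx
  | @cons x c w h p ih =>
    apply ih
    by_cases he : s(x, c) = s(a, b)
    · rw [Sym2.eq_iff] at he
      rcases he with ⟨rfl, rfl⟩ | ⟨rfl, rfl⟩
      · exact Or.inr (Reachable.refl _)
      · exact Or.inl (Reachable.refl _)
    · have hadj : (T.deleteEdges {s(a, b)}).Adj x c := by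
        rw [deleteEdges_adj]
        exact ⟨h, by simpa using he⟩
      exact hx.imp (fun hr => hr.trans hadj.reachable) (fun hr => hr.trans hadj.reachable)

lemma cover' (hc : T.Connected) (a b w : V) :
    (T.deleteEdges {s(a, b)}).Reachable a w ∨ (T.deleteEdges {s(a, b)}).Reachable b w := by
  obtain ⟨p⟩ := hc a w
  exact cover_aux' p (Or.inl (Reachable.refl _))

lemma small_side' (hc : T.Connected)
    (hdel : ∀ u v : V, T.Adj u v → ∃ w, compSize (T.deleteEdges {s(u, v)}) w ≤ 2)
    {a b : V} (hab : T.Adj a b)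
    (hb : 3 ≤ compSize (T.deleteEdges {s(a, b)}) b) :
    compSize (T.deleteEdges {s(a, b)}) a ≤ 2 := by
  obtain ⟨w, hw⟩ := hdel a b hab
  rcases cover' hc a b w with h | h
  · rw [← reach_congr' h]; exact hw
  · rw [reach_congr' h] at hw; omega

lemma good_center' [Fintype V] (hc : T.Connected) (h3 : 3 ≤ Fintype.card V) {x : V}
    (hx : ∀ u, T.Adj x u → compSize (T.deleteEdges {s(x, u)}) u ≤ 2) :
    Is1StarCenter T x := by
  refine ⟨?_, ?_, ?_⟩
  · unfold compSize
    have h : {u | T.Reachable x u} = Set.univ := Set.eq_univ_of_forall fun u => hc x u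
    rw [h, Set.ncard_univ, Nat.card_eq_fintype_card]
    exact h3
  · intro w hw
    by_cases hwx : w = x
    · subst hwx; simp [SimpleGraph.dist_self]
    classical
    obtain ⟨q⟩ := hw
    obtain ⟨r, hr⟩ := q.toPath
    cases r with
    | nil => exact absurd rfl hwx
    | @cons _ c _ h q' =>
      rw [Walk.cons_isPath_iff] at hr
      set F := T.deleteEdges {s(x, c)} with hF
      have hxs : x ∉ q'.support := hr.2
      have hedges : ∀ e ∈ q'.edges, e ∈ F.edgeSet := by
        intro e he
        rw [hF, edgeSet_deleteEdges]
        refine ⟨q'.edges_subset_edgeSet he, ?_⟩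
        simp only [Set.mem_singleton_iff]
        rintro rfl
        exact hxs (q'.fst_mem_support_of_mem_edges he)
      have hreach : F.Reachable c w := ⟨q'.transfer F hedges⟩
      have hC : compSize F c ≤ 2 := hx c h
      by_cases hwc : w = c
      · subst hwc
        calc T.dist x w ≤ (Walk.cons h Walk.nil).length := dist_le _
        _ ≤ 2 := by simp
      · have hsub : ({c, w} : Set V) ⊆ {z | F.Reachable c z} := by
          rintro z (rfl | rfl)
          · exact Reachable.refl _
          · exact hreach
        have hCeq : ({c, w} : Set V) = {z | F.Reachable c z} := by
          apply Set.eq_of_subset_of_ncard_le hsub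
          rw [Set.ncard_pair (Ne.symm hwc)]
          exact hC
        have hadj : T.Adj c w := by
          obtain ⟨rr⟩ := hreach
          cases rr with
          | nil => exact absurd rfl hwc
          | @cons _ d _ h1 rest =>
            have hd : d ∈ ({c, w} : Set V) := by rw [hCeq]; exact h1.reachable
            rcases hd with rfl | rfl
            · exact absurd rfl h1.ne
            · exact ((deleteEdges_adj).mp h1).1
        calc T.dist x w ≤ (Walk.cons h (Walk.cons hadj Walk.nil)).length := dist_le _
        _ ≤ 2 := by simp
  · intro u hu
    have hC : compSize (T.deleteEdges {s(x, u)}) u ≤ 2 := hx u hu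
    set F := T.deleteEdges {s(x, u)} with hF
    set C := {z | F.Reachable u z} with hCdef
    have hsub : {y | T.Adj u y} ⊆ insert x (C \ {u}) := by
      intro y hy
      by_cases hyx : y = x
      · subst hyx; exact Set.mem_insert _ _
      · have hadj : F.Adj u y := by
          rw [hF, deleteEdges_adj]
          refine ⟨hy, fun hin => ?_⟩
          simp only [Set.mem_singleton_iff, Sym2.eq_iff] at hin
          rcases hin with ⟨h1, h2⟩ | ⟨h1, h2⟩
          · exact hu.ne h1.symm
          · exact hyx h2
        exact Set.mem_insert_of_mem _ ⟨hadj.reachable, fun hyu => hadj.ne' hyu⟩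
    have huC : u ∈ C := Reachable.refl _
    have h1 : (C \ {u}).ncard = C.ncard - 1 := Set.ncard_diff_singleton_of_mem huC
    calc {y | T.Adj u y}.ncard ≤ (insert x (C \ {u})).ncard :=
        Set.ncard_le_ncard hsub (Set.toFinite _)
      _ ≤ (C \ {u}).ncard + 1 := Set.ncard_insert_le _ _
      _ ≤ 2 := by rw [h1]; have : C.ncard ≤ 2 := hC; omega

end Aux
theorem stmt3 [Fintype V] (T : SimpleGraph V) (hT : T.IsTree)
    (h3 : 3 ≤ Fintype.card V)
    (hdel : ∀ u v : V, T.Adj u v → ∃ w, compSize (T.deleteEdges {s(u, v)}) w ≤ 2) :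
    Is1Star T := by
  have hc := hT.isConnected
  have hV : Nonempty V := Fintype.card_pos_iff.mp (by omega)
  refine ⟨hc, ?_⟩
  obtain ⟨x₀⟩ := hV
  by_cases hx₀ : ∀ u, T.Adj x₀ u → compSize (T.deleteEdges {s(x₀, u)}) u ≤ 2
  · exact ⟨x₀, good_center' hc h3 hx₀⟩
  push_neg at hx₀
  obtain ⟨u1, hadj1, hbig1⟩ := hx₀
  have hsmall0 : compSize (T.deleteEdges {s(x₀, u1)}) x₀ ≤ 2 :=
    small_side' hc hdel hadj1 (by omega)
  by_cases hu1 : ∀ u, T.Adj u1 u → compSize (T.deleteEdges {s(u1, u)}) u ≤ 2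
  · exact ⟨u1, good_center' hc h3 hu1⟩
  push_neg at hu1
  obtain ⟨u2, hadj2, hbig2⟩ := hu1
  have hne20 : u2 ≠ x₀ := by
    intro h
    rw [h, show s(u1, x₀) = s(x₀, u1) from Sym2.eq_swap] at hbig2
    omega
  have hsmall1 : compSize (T.deleteEdges {s(u1, u2)}) u1 ≤ 2 :=
    small_side' hc hdel hadj2 (by omega)
  refine ⟨u2, good_center' hc h3 ?_⟩
  intro v hv
  by_cases hvu1 : v = u1
  · rw [hvu1, show s(u2, u1) = s(u1, u2) from Sym2.eq_swap]
    exact hsmall1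
  · rw [show s(u2, v) = s(v, u2) from Sym2.eq_swap]
    apply small_side' hc hdel hv.symm
    set F' := T.deleteEdges {s(v, u2)} with hF'
    have ha1 : F'.Adj u2 u1 := by
      rw [hF', deleteEdges_adj]
      refine ⟨hadj2.symm, fun hin => ?_⟩
      simp only [Set.mem_singleton_iff, Sym2.eq_iff] at hin
      rcases hin with ⟨h1, h2⟩ | ⟨h1, h2⟩
      · exact hv.ne h1
      · exact hvu1 h2.symm
    have ha2 : F'.Adj u1 x₀ := by
      rw [hF', deleteEdges_adj]
      refine ⟨hadj1.symm, fun hin => ?_⟩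
      simp only [Set.mem_singleton_iff, Sym2.eq_iff] at hin
      rcases hin with ⟨h1, h2⟩ | ⟨h1, h2⟩
      · exact hvu1 h1.symm
      · exact hadj2.ne h1
    have hsub : ({u2, u1, x₀} : Set V) ⊆ {z | F'.Reachable u2 z} := by
      rintro z (rfl | rfl | rfl)
      · exact Reachable.refl _
      · exact ha1.reachable
      · exact (ha1.reachable).trans ha2.reachable
    have hcard : ({u2, u1, x₀} : Set V).ncard = 3 := by
      rw [Set.ncard_insert_of_notMem (by simp [hadj2.ne', hne20]) (Set.toFinite _),
        Set.ncard_pair hadj1.ne']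
    calc 3 = ({u2, u1, x₀} : Set V).ncard := hcard.symm
      _ ≤ _ := Set.ncard_le_ncard hsub (Set.toFinite _)
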